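/- For every real ξ > 0 and every integer n ≥ 1, there exists u ∈ (3,4) such that: every function F : ℝ^n → ℝ satisfying |F(x) − (−1.1)| ≤ 0.1 for all x ∈ [2,3]^n and |F(x) − 0.1| ≤ 0.1 for all x ∈ [u,4]^n has Lipschitz constant (with respect to the Euclidean metric) at least ξ; that is, for every K ≥ 0, if |F(x) − F(y)| ≤ K·‖x−y‖₂ for all x, y ∈ ℝ^n, then K ≥ ξ. -/

import Mathlib

/-- For every `ξ > 0` and every `n ≥ 1` there exists
`u ∈ (3,4)` such that every `F : ℝⁿ → ℝ` that is uniformly `0.1`-close to the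
value `−1.1` on the cube `[2,3]ⁿ` and uniformly `0.1`-close to the value `0.1`
on the cube `[u,4]ⁿ` has Lipschitz constant (w.r.t. the Euclidean metric) at
least `ξ`: any `K ≥ 0` with `|F(x) − F(y)| ≤ K·‖x−y‖₂` for all `x, y` satisfies
`K ≥ ξ`. -/
theorem robust_classifier_large_lipschitz (ξ : ℝ) (hξ : 0 < ξ) (n : ℕ) (hn : 1 ≤ n) :
    ∃ u : ℝ, 3 < u ∧ u < 4 ∧
      ∀ F : EuclideanSpace ℝ (Fin n) → ℝ,
        (∀ x : EuclideanSpace ℝ (Fin n), (∀ i, x i ∈ Set.Icc (2 : ℝ) 3) →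
          |F x - (-1.1)| ≤ 0.1) →
        (∀ x : EuclideanSpace ℝ (Fin n), (∀ i, x i ∈ Set.Icc u 4) →
          |F x - 0.1| ≤ 0.1) →
        ∀ K : ℝ, 0 ≤ K →
          (∀ x y : EuclideanSpace ℝ (Fin n), |F x - F y| ≤ K * dist x y) →
          ξ ≤ K := by
  have hnpos : (0:ℝ) < n := by exact_mod_cast Nat.lt_of_lt_of_le Nat.zero_lt_one hn
  have hsq : (0:ℝ) < Real.sqrt n := Real.sqrt_pos.mpr hnpos
  set δ : ℝ := min (1/2) (1/(ξ * Real.sqrt n)) with hδdef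
  have hδpos : 0 < δ := lt_min (by norm_num) (by positivity)
  have hδhalf : δ ≤ 1/2 := min_le_left _ _
  have hδle : δ ≤ 1/(ξ * Real.sqrt n) := min_le_right _ _
  refine ⟨3 + δ, by linarith, by linarith, ?_⟩
  intro F h1 h2 K hK hLip
  set x : EuclideanSpace ℝ (Fin n) := WithLp.toLp 2 (fun _ => (3:ℝ))
  set y : EuclideanSpace ℝ (Fin n) := WithLp.toLp 2 (fun _ => (3 + δ : ℝ))
  have hx : |F x - (-1.1)| ≤ 0.1 := h1 x (fun i => ⟨by norm_num, le_refl _⟩)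
  have hy : |F y - 0.1| ≤ 0.1 := h2 y (fun i => ⟨le_refl _, by simp only [y, PiLp.toLp_apply]; linarith⟩)
  have hgap : (1:ℝ) ≤ |F x - F y| := by
    rw [abs_le] at hx hy
    rw [le_abs]
    right
    linarith
  have hdist : dist x y = δ * Real.sqrt n := by
    rw [EuclideanSpace.dist_eq]
    have : ∀ i : Fin n, dist (x i) (y i)^2 = δ^2 := by
      intro i; simp only [x, y, PiLp.toLp_apply, Real.dist_eq]
      rw [abs_of_nonpos (by linarith)]; ring
    rw [Finset.sum_congr rfl (fun i _ => this i)]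
    rw [Finset.sum_const, Finset.card_univ, Fintype.card_fin, nsmul_eq_mul]
    rw [mul_comm, Real.sqrt_mul (sq_nonneg δ), Real.sqrt_sq hδpos.le]
  have hle := hLip x y
  rw [hdist] at hle
  have h1K : (1:ℝ) ≤ K * (δ * Real.sqrt n) := le_trans hgap hle
  have hδs : δ * Real.sqrt n ≤ 1/ξ := by
    rw [div_mul_eq_div_div] at hδle
    calc δ * Real.sqrt n ≤ (1/ξ/Real.sqrt n) * Real.sqrt n := by
          exact mul_le_mul_of_nonneg_right hδle hsq.le
      _ = 1/ξ := by field_simp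
  by_contra h
  push_neg at h
  have hA : K * (δ * Real.sqrt n) ≤ K * (1/ξ) := mul_le_mul_of_nonneg_left hδs hK
  have hB : K * (1/ξ) < ξ * (1/ξ) := mul_lt_mul_of_pos_right h (by positivity)
  rw [mul_one_div_cancel hξ.ne'] at hB
  linarith
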